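/- arXiv:1704.04548 — 5 statements merged into one kernel-verified Lean document; each statement's English description precedes it below -/
import Mathlib

section
/- Define F(ε,γ) := √((γ/(1-γ))² + 1 - ε/(1-γ)) - γ/(1-γ) for 0 ≤ γ < 1 and 0 < ε < 1 - γ. Then F(ε,γ) ≥ (1/(2√2)) · min( √(1 - ε/(1-γ)), (1 - γ - ε)/γ ). -/
lemma sqrt_sub_lower (a t c : ℝ) (ha : 0 ≤ a) (hc : 0 ≤ c)
    (h : 2 * a * c + c ^ 2 ≤ t) : c ≤ Real.sqrt (a ^ 2 + t) - a := by
  have h1 : (a + c) ^ 2 ≤ a ^ 2 + t := by nlinarith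
  have h2 : a + c ≤ Real.sqrt (a ^ 2 + t) := by
    rw [show a + c = Real.sqrt ((a + c) ^ 2) from (Real.sqrt_sq (by linarith)).symm]
    exact Real.sqrt_le_sqrt h1
  linarith

lemma Faux (a t m : ℝ) (ha : 0 ≤ a) (ht : 0 < t) (hm0 : 0 ≤ m)
    (hmst : m ≤ Real.sqrt t) (ham : a * m ≤ t) :
    1 / (2 * Real.sqrt 2) * m ≤ Real.sqrt (a ^ 2 + t) - a := by
  have hs2sq : Real.sqrt 2 ^ 2 = 2 := Real.sq_sqrt (by norm_num)
  have hs2pos : (0:ℝ) < Real.sqrt 2 := Real.sqrt_pos.mpr (by norm_num)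
  have hs2le : Real.sqrt 2 ≤ 7/4 := by nlinarith
  have hinv : (1:ℝ) / (2 * Real.sqrt 2) = Real.sqrt 2 / 4 := by
    rw [div_eq_div_iff (by positivity) (by norm_num)]
    nlinarith
  rw [hinv]
  apply sqrt_sub_lower _ _ _ ha (by positivity)
  have hst : Real.sqrt t ^ 2 = t := Real.sq_sqrt ht.le
  have hmsq : m ^ 2 ≤ t := by nlinarith [Real.sqrt_nonneg t]
  have hterm : (Real.sqrt 2 / 4 * m) ^ 2 = m ^ 2 / 8 := by
    rw [mul_pow, div_pow, hs2sq]; ring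
  nlinarith [hterm, mul_le_mul_of_nonneg_left ham hs2pos.le,
    mul_le_mul_of_nonneg_right hs2le ht.le]

/-- Lower bound on `F(ε,γ) := √((γ/(1-γ))² + 1 - ε/(1-γ)) - γ/(1-γ)` for `0 ≤ γ < 1`,
`0 < ε < 1-γ`.  When `γ = 0` the second term of the min is interpreted as `+∞`, i.e. the
bound reduces to the first term. -/
theorem stmt2 (γ ε : ℝ) (hγ0 : 0 ≤ γ) (hγ1 : γ < 1) (hε0 : 0 < ε) (hε1 : ε < 1 - γ) :
    (γ = 0 →
      (1 / (2 * Real.sqrt 2)) * Real.sqrt (1 - ε / (1 - γ)) ≤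
        Real.sqrt ((γ / (1 - γ)) ^ 2 + 1 - ε / (1 - γ)) - γ / (1 - γ)) ∧
    (0 < γ →
      (1 / (2 * Real.sqrt 2)) *
          min (Real.sqrt (1 - ε / (1 - γ))) ((1 - γ - ε) / γ) ≤
        Real.sqrt ((γ / (1 - γ)) ^ 2 + 1 - ε / (1 - γ)) - γ / (1 - γ)) := by
  have hs : (0:ℝ) < 1 - γ := by linarith
  have ha0 : 0 ≤ γ / (1 - γ) := div_nonneg hγ0 hs.le
  have ht0 : 0 < 1 - ε / (1 - γ) := by
    have : ε / (1 - γ) < 1 := (div_lt_one hs).mpr (by linarith)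
    linarith
  have hst : Real.sqrt (1 - ε / (1 - γ)) ^ 2 = 1 - ε / (1 - γ) := Real.sq_sqrt ht0.le
  have hstnn : 0 ≤ Real.sqrt (1 - ε / (1 - γ)) := Real.sqrt_nonneg _
  have hre : (γ / (1 - γ)) ^ 2 + 1 - ε / (1 - γ)
      = (γ / (1 - γ)) ^ 2 + (1 - ε / (1 - γ)) := by ring
  rw [hre]
  constructor
  · intro hγ
    apply Faux _ _ _ ha0 ht0 hstnn le_rfl
    rw [hγ]
    simp
    nlinarith
  · intro hγ
    have haγ : 0 < γ / (1 - γ) := div_pos hγ hs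
    have hB : (1 - γ - ε) / γ = (1 - ε / (1 - γ)) / (γ / (1 - γ)) := by
      rw [div_eq_div_iff hγ.ne' haγ.ne']
      field_simp
    set m := min (Real.sqrt (1 - ε / (1 - γ))) ((1 - γ - ε) / γ) with hmdef
    have hm0 : 0 ≤ m := le_min hstnn (by rw [hB]; positivity)
    have hmst : m ≤ Real.sqrt (1 - ε / (1 - γ)) := min_le_left _ _
    apply Faux _ _ _ ha0 ht0 hm0 hmst
    rcases le_total (γ / (1 - γ)) (Real.sqrt (1 - ε / (1 - γ))) with h | h
    · nlinarith
    · have hm : m ≤ (1 - ε / (1 - γ)) / (γ / (1 - γ)) := by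
        rw [hmdef, hB]; exact min_le_right _ _
      calc γ / (1 - γ) * m ≤ γ / (1 - γ) * ((1 - ε / (1 - γ)) / (γ / (1 - γ))) :=
            mul_le_mul_of_nonneg_left hm ha0
        _ = 1 - ε / (1 - γ) := by field_simp
end

section
/- Let X and Y be Gaussian random vectors in ℝ^d with X ~ N(μ_X, Σ) and Y ~ N(μ_Y, Σ), where Σ is positive semidefinite and μ_X - μ_Y lies in the orthogonal complement of the kernel of Σ. Then the Kullback–Leibler divergence KL(law(X), law(Y)) = (1/2)·(μ_X - μ_Y)ᵀ Σ† (μ_X - μ_Y), where Σ† is the Moore–Penrose pseudoinverse of Σ. -/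
open Matrix MeasureTheory ProbabilityTheory

/-- The (possibly degenerate) multivariate Gaussian `N(m, S)` on `ℝ^d`, defined as the
pushforward of a standard Gaussian vector under `x ↦ m + √S x`. -/
noncomputable def gaussianVec {d : ℕ} (m : Fin d → ℝ) {S : Matrix (Fin d) (Fin d) ℝ}
    (hS : S.PosSemidef) : Measure (Fin d → ℝ) :=
  (Measure.pi fun _ : Fin d => gaussianReal 0 1).map fun x => m + (hS.1.eigenvectorUnitary.1 * Matrix.diagonal (fun i => Real.sqrt (hS.1.eigenvalues i)) *
    (star hS.1.eigenvectorUnitary : Matrix (Fin d) (Fin d) ℝ)).mulVec x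

/-- Moore–Penrose pseudoinverse of a Hermitian real matrix, via the spectral decomposition
(inverting the nonzero eigenvalues; `(0 : ℝ)⁻¹ = 0`). -/
noncomputable def pinvSym {d : ℕ} {S : Matrix (Fin d) (Fin d) ℝ} (hS : S.IsHermitian) :
    Matrix (Fin d) (Fin d) ℝ :=
  hS.eigenvectorUnitary.1 * Matrix.diagonal (fun i => (hS.eigenvalues i)⁻¹) *
    (star hS.eigenvectorUnitary : Matrix (Fin d) (Fin d) ℝ)

/-- Kullback–Leibler divergence `∫ log (dμ/dν) dμ`. -/
noncomputable def klDiv' {α : Type*} [MeasurableSpace α] (μ ν : Measure α) : ℝ :=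
  ∫ x, Real.log (μ.rnDeriv ν x).toReal ∂μ

namespace StmtAux

open Real
open scoped ENNReal NNReal

/-! ### Lintegral of a product over a product measure -/

theorem lintegral_pi_prod {n : ℕ} {E : Fin n → Type*} [∀ i, MeasurableSpace (E i)]
    (μ : ∀ i, Measure (E i)) [∀ i, SigmaFinite (μ i)]
    (f : ∀ i, E i → ℝ≥0∞) (hf : ∀ i, Measurable (f i)) :
    ∫⁻ x, ∏ i, f i (x i) ∂Measure.pi μ = ∏ i, ∫⁻ x, f i x ∂μ i := by
  induction n with
  | zero => simp
  | succ n ih =>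
    have h := (measurePreserving_piFinSuccAbove μ 0).symm
    rw [← h.lintegral_comp (f := fun x => ∏ i, f i (x i))
      (Finset.measurable_prod _ fun i _ => (hf i).comp (measurable_pi_apply i))]
    simp_rw [MeasurableEquiv.piFinSuccAbove_symm_apply, Fin.insertNthEquiv,
      Fin.prod_univ_succ, Fin.insertNth_zero]
    simp only [Fin.zero_succAbove, Function.comp_def, Fin.cons_zero, Fin.cons_succ, cast_eq,
      Equiv.coe_fn_mk]
    exact (lintegral_prod_mul (μ := μ 0) (ν := Measure.pi fun j : Fin n => μ j.succ) (f := f 0) (g := fun y : ((j : Fin n) → E j.succ) => ∏ i : Fin n, f i.succ (y i))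
      (hf 0).aemeasurable
      (Finset.measurable_prod _ fun i _ => (hf i.succ).comp (measurable_pi_apply i)).aemeasurable).trans (by
      rw [ih (fun i => μ i.succ) (fun i => f i.succ) (fun i => hf i.succ)])

/-! ### Product measure of `withDensity` measures -/

theorem pi_withDensity' {n : ℕ} (μ : Fin n → Measure ℝ) [∀ i, SigmaFinite (μ i)]
    (f : Fin n → ℝ → ℝ≥0∞) (hf : ∀ i, Measurable (f i))
    [∀ i, SigmaFinite ((μ i).withDensity (f i))] :
    Measure.pi (fun i => (μ i).withDensity (f i))
      = (Measure.pi μ).withDensity (fun x => ∏ i, f i (x i)) := by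
  refine (Measure.pi_eq (μ := fun i => (μ i).withDensity (f i))
    (μ' := (Measure.pi μ).withDensity (fun x => ∏ i, f i (x i))) fun s hs => ?_)
  rw [withDensity_apply _ (MeasurableSet.univ_pi hs),
    ← lintegral_indicator (f := fun x => ∏ i, f i (x i)) (MeasurableSet.univ_pi hs)]
  have h1 : ∀ x : Fin n → ℝ, (Set.pi Set.univ s).indicator (fun x => ∏ i, f i (x i)) x
      = ∏ i, (s i).indicator (f i) (x i) := by
    intro x
    by_cases hx : x ∈ Set.pi Set.univ s
    · rw [Set.indicator_of_mem hx]
      exact Finset.prod_congr rfl fun i _ =>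
        (Set.indicator_of_mem (hx i (Set.mem_univ i)) _).symm
    · rw [Set.indicator_of_notMem hx]
      obtain ⟨i, hi⟩ : ∃ i, x i ∉ s i := by
        by_contra h
        push_neg at h
        exact hx fun i _ => h i
      exact (Finset.prod_eq_zero (Finset.mem_univ i)
        (Set.indicator_of_notMem hi _)).symm
  rw [lintegral_congr h1,
    lintegral_pi_prod μ _ (fun i => (hf i).indicator (hs i))]
  exact Finset.prod_congr rfl fun i _ => by
    rw [lintegral_indicator (hs i), ← withDensity_apply _ (hs i)]

/-! ### One-dimensional Cameron–Martin -/

theorem gaussianReal_shift (w : ℝ) : gaussianReal w 1 = (gaussianReal 0 1).withDensity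
    (fun x => ENNReal.ofReal (Real.exp (w * x - w ^ 2 / 2))) := by
  rw [gaussianReal_of_var_ne_zero _ one_ne_zero, gaussianReal_of_var_ne_zero _ one_ne_zero,
    ← withDensity_mul _ (measurable_gaussianPDF 0 1)
      (by fun_prop : Measurable fun x => ENNReal.ofReal (Real.exp (w * x - w ^ 2 / 2)))]
  congr 1
  funext x
  simp only [Pi.mul_apply, gaussianPDF_def, gaussianPDFReal]
  rw [← ENNReal.ofReal_mul (by positivity)]
  congr 1
  push_cast
  rw [show -(x - w) ^ 2 / (2 * (1:ℝ)) = -(x - 0) ^ 2 / (2 * 1) + (w * x - w ^ 2 / 2) by ring,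
    Real.exp_add]
  ring

/-! ### Pushing a `withDensity` forward -/

theorem map_withDensity_comp {α β : Type*} [MeasurableSpace α] [MeasurableSpace β] (μ : Measure α)
    {T : α → β} (hT : Measurable T) {f : β → ℝ≥0∞} (hf : Measurable f) :
    (μ.withDensity (f ∘ T)).map T = (μ.map T).withDensity f := by
  ext E hE
  rw [Measure.map_apply hT hE, withDensity_apply _ hE, withDensity_apply _ (hT hE),
    setLIntegral_map hE hf hT]
  rfl

/-! ### Marginals and integrability -/

theorem pi_map_eval {n : ℕ} (μ : Fin n → Measure ℝ) [∀ i, IsProbabilityMeasure (μ i)]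
    (i : Fin n) : (Measure.pi μ).map (fun x => x i) = μ i := by
  ext s hs
  rw [Measure.map_apply (measurable_pi_apply i) hs]
  have h : (fun x : Fin n → ℝ => x i) ⁻¹' s
      = Set.pi Set.univ (Function.update (fun _ => Set.univ) i s) := by
    ext x
    simp only [Set.mem_preimage, Set.mem_pi, Set.mem_univ, true_implies]
    constructor
    · intro h j
      rcases eq_or_ne j i with rfl | hj
      · simpa using h
      · simp [Function.update_of_ne hj]
    · intro h
      simpa using h i
  rw [h, Measure.pi_pi, ← Finset.prod_mul_prod_compl {i}]
  simp only [Finset.prod_singleton, Function.update_self]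
  rw [Finset.prod_congr rfl (fun j hj => by
    rw [Function.update_of_ne (by simpa using hj)] : ∀ j ∈ ({i}ᶜ : Finset (Fin n)), _ = _)]
  simp

theorem integrable_id_gaussianReal : Integrable id (gaussianReal 0 1) := by
  rw [gaussianReal_of_var_ne_zero _ one_ne_zero]
  rw [integrable_withDensity_iff (measurable_gaussianPDF 0 1)
    (Filter.Eventually.of_forall fun x => ENNReal.ofReal_lt_top)]
  have h : (fun x : ℝ => id x * (gaussianPDF 0 1 x).toReal)
      = fun x => (√(2 * π * (1:ℝ≥0)))⁻¹ * (x * Real.exp (-(2⁻¹:ℝ) * x ^ 2)) := by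
    funext x
    rw [gaussianPDF, ENNReal.toReal_ofReal (gaussianPDFReal_nonneg _ _ _), gaussianPDFReal]
    push_cast
    simp only [id_eq]
    ring_nf
  rw [h]
  exact (integrable_mul_exp_neg_mul_sq (by norm_num)).const_mul _

theorem measurePreserving_neg_gaussian :
    MeasurePreserving (fun x : ℝ => -x) (gaussianReal 0 1) (gaussianReal 0 1) := by
  refine ⟨measurable_neg, ?_⟩
  have h := gaussianReal_map_const_mul (μ := 0) (v := 1) (-1)
  simp only [neg_one_mul, mul_zero] at h
  convert h using 2
  simp

/-! ### Matrix lemmas via the spectral decomposition -/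

variable {d : ℕ} {S : Matrix (Fin d) (Fin d) ℝ}

noncomputable def conjU (hS : S.IsHermitian) (a : Fin d → ℝ) : Matrix (Fin d) (Fin d) ℝ :=
  hS.eigenvectorUnitary.1 * Matrix.diagonal a *
    (star hS.eigenvectorUnitary : Matrix (Fin d) (Fin d) ℝ)

theorem conjU_mul (hS : S.IsHermitian) (a b : Fin d → ℝ) :
    conjU hS a * conjU hS b = conjU hS (fun i => a i * b i) := by
  have hU : (star hS.eigenvectorUnitary : Matrix (Fin d) (Fin d) ℝ) * hS.eigenvectorUnitary.1
      = 1 := Matrix.UnitaryGroup.star_mul_self _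
  calc conjU hS a * conjU hS b
      = hS.eigenvectorUnitary.1 * (Matrix.diagonal a *
        ((star hS.eigenvectorUnitary : Matrix (Fin d) (Fin d) ℝ) * hS.eigenvectorUnitary.1) *
        Matrix.diagonal b) * (star hS.eigenvectorUnitary : Matrix (Fin d) (Fin d) ℝ) := by
        simp only [conjU, Matrix.mul_assoc]
    _ = conjU hS (fun i => a i * b i) := by
        rw [hU, Matrix.mul_one, Matrix.diagonal_mul_diagonal]
        rfl

theorem S_eq_conjU (hS : S.IsHermitian) : S = conjU hS hS.eigenvalues :=
  hS.spectral_theorem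

theorem sqrt_eq_conjU (hS : S.PosSemidef) :
    (hS.1.eigenvectorUnitary.1 * Matrix.diagonal (fun i => Real.sqrt (hS.1.eigenvalues i)) *
    (star hS.1.eigenvectorUnitary : Matrix (Fin d) (Fin d) ℝ)) = conjU hS.1 (fun i => √(hS.1.eigenvalues i)) := by
  rfl

theorem sqrt_mul_self' (hS : S.PosSemidef) :
    (hS.1.eigenvectorUnitary.1 * Matrix.diagonal (fun i => Real.sqrt (hS.1.eigenvalues i)) *
    (star hS.1.eigenvectorUnitary : Matrix (Fin d) (Fin d) ℝ)) * (hS.1.eigenvectorUnitary.1 * Matrix.diagonal (fun i => Real.sqrt (hS.1.eigenvalues i)) *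
    (star hS.1.eigenvectorUnitary : Matrix (Fin d) (Fin d) ℝ)) = S := by
  rw [sqrt_eq_conjU hS, conjU_mul]
  conv_rhs => rw [S_eq_conjU hS.1]
  congr 1
  funext i
  exact Real.mul_self_sqrt (hS.eigenvalues_nonneg i)

theorem pinv_eq_conjU (hS : S.IsHermitian) :
    pinvSym hS = conjU hS (fun i => (hS.eigenvalues i)⁻¹) := rfl

theorem conjU_transpose (hS : S.IsHermitian) (a : Fin d → ℝ) :
    (conjU hS a)ᵀ = conjU hS a := by
  rw [← Matrix.conjTranspose_eq_transpose_of_trivial]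
  simp only [conjU, Matrix.conjTranspose_mul, Matrix.diagonal_conjTranspose,
    Matrix.conjTranspose_conjTranspose, star_star, star_trivial, Matrix.star_eq_conjTranspose]
  rw [Matrix.mul_assoc]

theorem SPS_eq (hS : S.PosSemidef) : S * pinvSym hS.1 * S = S := by
  have key : conjU hS.1 hS.1.eigenvalues * conjU hS.1 (fun i => (hS.1.eigenvalues i)⁻¹) *
      conjU hS.1 hS.1.eigenvalues = conjU hS.1 hS.1.eigenvalues := by
    rw [conjU_mul, conjU_mul]
    congr 1
    funext i
    by_cases hl : hS.1.eigenvalues i = 0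
    · simp [hl]
    · field_simp
  rw [← S_eq_conjU hS.1] at key
  rw [pinv_eq_conjU]
  exact key

theorem sqrt_transpose (hS : S.PosSemidef) : (hS.1.eigenvectorUnitary.1 * Matrix.diagonal (fun i => Real.sqrt (hS.1.eigenvalues i)) *
    (star hS.1.eigenvectorUnitary : Matrix (Fin d) (Fin d) ℝ))ᵀ = (hS.1.eigenvectorUnitary.1 * Matrix.diagonal (fun i => Real.sqrt (hS.1.eigenvalues i)) *
    (star hS.1.eigenvectorUnitary : Matrix (Fin d) (Fin d) ℝ)) := by
  rw [sqrt_eq_conjU hS]; exact conjU_transpose _ _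

theorem sqrt_sqrt_pinv (hS : S.PosSemidef) :
    (hS.1.eigenvectorUnitary.1 * Matrix.diagonal (fun i => Real.sqrt (hS.1.eigenvalues i)) *
    (star hS.1.eigenvectorUnitary : Matrix (Fin d) (Fin d) ℝ)) * ((hS.1.eigenvectorUnitary.1 * Matrix.diagonal (fun i => Real.sqrt (hS.1.eigenvalues i)) *
    (star hS.1.eigenvectorUnitary : Matrix (Fin d) (Fin d) ℝ)) * pinvSym hS.1) = S * pinvSym hS.1 := by
  rw [← Matrix.mul_assoc, sqrt_mul_self' hS]

theorem SP_fixes (hS : S.PosSemidef) {x : Fin d → ℝ} (hx : x ∈ LinearMap.range S.mulVecLin) :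
    (S * pinvSym hS.1).mulVec x = x := by
  obtain ⟨u, hu⟩ := hx
  rw [← hu]
  show (S * pinvSym hS.1).mulVec (S.mulVec u) = S.mulVec u
  rw [Matrix.mulVec_mulVec, Matrix.mul_assoc, ← Matrix.mul_assoc, SPS_eq hS]

theorem dot_mulVec_symm {A : Matrix (Fin d) (Fin d) ℝ} (hA : Aᵀ = A) (v x : Fin d → ℝ) :
    v ⬝ᵥ A.mulVec x = A.mulVec v ⬝ᵥ x := by
  rw [Matrix.dotProduct_mulVec]
  nth_rewrite 1 [← hA]
  rw [Matrix.vecMul_transpose]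

end StmtAux

/-- KL divergence between two Gaussians with the same psd covariance `S` whose mean
difference lies in `(ker S)^⊥ = range S` equals `½ (μX-μY)ᵀ S† (μX-μY)`. -/
theorem stmt4 {d : ℕ} (μX μY : Fin d → ℝ) (S : Matrix (Fin d) (Fin d) ℝ)
    (hS : S.PosSemidef) (hmem : μX - μY ∈ LinearMap.range S.mulVecLin) :
    klDiv' (gaussianVec μX hS) (gaussianVec μY hS)
      = (1 / 2) * ((μX - μY) ⬝ᵥ (pinvSym hS.1).mulVec (μX - μY)) := by
  open StmtAux Real in
  open scoped ENNReal in
  set Δ : Fin d → ℝ := μX - μY with hΔ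
  set A : Matrix (Fin d) (Fin d) ℝ := (hS.1.eigenvectorUnitary.1 * Matrix.diagonal (fun i => Real.sqrt (hS.1.eigenvalues i)) *
    (star hS.1.eigenvectorUnitary : Matrix (Fin d) (Fin d) ℝ)) with hA
  set P : Matrix (Fin d) (Fin d) ℝ := pinvSym hS.1 with hP
  set v : Fin d → ℝ := P.mulVec Δ with hv
  set w : Fin d → ℝ := A.mulVec v with hw
  set c : ℝ := (Δ ⬝ᵥ v) / 2 with hc
  set γ : Measure (Fin d → ℝ) := Measure.pi fun _ : Fin d => gaussianReal 0 1 with hγ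
  -- matrix facts
  have hAt : Aᵀ = A := sqrt_transpose hS
  have hAw : A.mulVec w = Δ := by
    rw [hw, hv, Matrix.mulVec_mulVec, Matrix.mulVec_mulVec,
      show A * A * P = S * P by rw [hA, hP, sqrt_mul_self' hS], hP]
    exact SP_fixes hS hmem
  have hwx : ∀ x, v ⬝ᵥ A.mulVec x = w ⬝ᵥ x := fun x => dot_mulVec_symm hAt v x
  have hww : w ⬝ᵥ w = Δ ⬝ᵥ v := by
    nth_rewrite 2 [hw]
    rw [dot_mulVec_symm hAt w v, hAw]
  -- measurability
  have hAmeas : Measurable fun x : Fin d → ℝ => A.mulVec x := by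
    refine measurable_pi_iff.mpr fun i => ?_
    simpa [Matrix.mulVec, dotProduct] using
      Finset.measurable_sum Finset.univ fun j _ => (by fun_prop : Measurable fun x : Fin d → ℝ => A i j * x j)
  have hT : Measurable fun x : Fin d → ℝ => μY + A.mulVec x := measurable_const.add hAmeas
  have hTX : Measurable fun x : Fin d → ℝ => μX + A.mulVec x := measurable_const.add hAmeas
  -- densities
  set F : (Fin d → ℝ) → ℝ≥0∞ := fun y => ENNReal.ofReal (rexp (v ⬝ᵥ (y - μY) - c)) with hF
  set G : (Fin d → ℝ) → ℝ≥0∞ := fun x => ENNReal.ofReal (rexp (w ⬝ᵥ x - c)) with hG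
  have hvcont : Continuous fun y : Fin d → ℝ => v ⬝ᵥ (y - μY) - c := by
    show Continuous fun y : Fin d → ℝ => (∑ i, v i * (y i - μY i)) - c
    fun_prop
  have hFmeas : Measurable F := by
    exact (ENNReal.measurable_ofReal.comp (Real.continuous_exp.comp hvcont).measurable)
  have hGmeas : Measurable G := by
    have : Continuous fun x : Fin d → ℝ => w ⬝ᵥ x - c := by
      show Continuous fun x : Fin d → ℝ => (∑ i, w i * x i) - c
      fun_prop
    exact (ENNReal.measurable_ofReal.comp (Real.continuous_exp.comp this).measurable)
  -- the key density identity
  have hkey : gaussianVec μX hS = (gaussianVec μY hS).withDensity F := by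
    have step1 : gaussianVec μX hS = (γ.map (fun x => x + w)).map
        (fun x => μY + A.mulVec x) := by
      have hadd : Measurable fun x : Fin d → ℝ => x + w := measurable_add_const w
      rw [gaussianVec, Measure.map_map hT hadd]
      congr 1
      funext x
      show μX + A.mulVec x = μY + A.mulVec (x + w)
      rw [Matrix.mulVec_add, hAw, hΔ]
      abel
    have step2 : γ.map (fun x => x + w) = Measure.pi (fun i => gaussianReal (w i) 1) := by
      exact (measurePreserving_pi (fun _ : Fin d => gaussianReal 0 1)
        (fun i => gaussianReal (w i) 1)
        (fun i => ⟨measurable_add_const _,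
          by simpa using gaussianReal_map_add_const (μ := 0) (v := 1) (w i)⟩)).map_eq
    have step3 : Measure.pi (fun i => gaussianReal (w i) 1) = γ.withDensity G := by
      set r : Fin d → ℝ → ℝ≥0∞ :=
        fun i x => ENNReal.ofReal (rexp (w i * x - w i ^ 2 / 2)) with hr
      have hrmeas : ∀ i, Measurable (r i) := fun i => by fun_prop
      have hshift : ∀ i, gaussianReal (w i) 1 = (gaussianReal 0 1).withDensity (r i) :=
        fun i => gaussianReal_shift (w i)
      haveI : ∀ i : Fin d, SigmaFinite ((gaussianReal 0 1).withDensity (r i)) :=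
        fun i => by rw [← hshift i]; infer_instance
      rw [show (fun i => gaussianReal (w i) 1)
          = fun i => (gaussianReal 0 1).withDensity (r i) from funext hshift,
        pi_withDensity' _ _ hrmeas]
      congr 1
      funext x
      rw [← ENNReal.ofReal_prod_of_nonneg (fun i _ => (Real.exp_nonneg _)), ← Real.exp_sum]
      congr 2
      rw [Finset.sum_sub_distrib, ← Finset.sum_div, hc, ← hww]
      simp [dotProduct, pow_two]
    have step4 : (γ.withDensity G).map (fun x => μY + A.mulVec x)
        = (gaussianVec μY hS).withDensity F := by
      have hGF : G = F ∘ (fun x => μY + A.mulVec x) := by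
        funext x
        show ENNReal.ofReal (rexp (w ⬝ᵥ x - c))
          = ENNReal.ofReal (rexp (v ⬝ᵥ (μY + A.mulVec x - μY) - c))
        rw [add_sub_cancel_left, hwx x]
      rw [hGF, map_withDensity_comp γ hT hFmeas, gaussianVec]
    rw [step1, step2, step3, step4]
  -- probability measure instances
  haveI : IsProbabilityMeasure (gaussianVec μY hS) := by
    rw [gaussianVec]
    exact Measure.isProbabilityMeasure_map hT.aemeasurable
  haveI : IsProbabilityMeasure (gaussianVec μX hS) := by
    rw [gaussianVec]
    exact Measure.isProbabilityMeasure_map hTX.aemeasurable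
  -- Radon-Nikodym derivative
  have hrn : (gaussianVec μX hS).rnDeriv (gaussianVec μY hS) =ᵐ[gaussianVec μY hS] F := by
    rw [hkey]
    exact Measure.rnDeriv_withDensity _ hFmeas
  have hac : gaussianVec μX hS ≪ gaussianVec μY hS := by
    rw [hkey]; exact withDensity_absolutelyContinuous _ _
  have hrn' : (gaussianVec μX hS).rnDeriv (gaussianVec μY hS) =ᵐ[gaussianVec μX hS] F :=
    hac.ae_eq hrn
  -- compute the KL divergence
  have hlog : (fun y => Real.log ((gaussianVec μX hS).rnDeriv (gaussianVec μY hS) y).toReal)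
      =ᵐ[gaussianVec μX hS] fun y => v ⬝ᵥ (y - μY) - c := by
    filter_upwards [hrn'] with y hy
    rw [hy, hF]
    simp only
    rw [ENNReal.toReal_ofReal (Real.exp_nonneg _), Real.log_exp]
  rw [klDiv', integral_congr_ae hlog]
  -- push forward the integral
  rw [gaussianVec, integral_map hTX.aemeasurable hvcont.aestronglyMeasurable]
  have hsimp : ∀ x : Fin d → ℝ, v ⬝ᵥ (μX + A.mulVec x - μY) - c
      = (Δ ⬝ᵥ v - c) + w ⬝ᵥ x := by
    intro x
    have h1 : μX + A.mulVec x - μY = Δ + A.mulVec x := by rw [hΔ]; abel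
    rw [h1, dotProduct_add, hwx x, dotProduct_comm Δ v]
    ring
  simp only [hsimp]
  -- integrability of the linear part
  have hint_eval : ∀ i, Integrable (fun x : Fin d → ℝ => x i) γ := by
    intro i
    have hmp : MeasurePreserving (fun x : Fin d → ℝ => x i) γ (gaussianReal 0 1) :=
      ⟨measurable_pi_apply i, pi_map_eval _ i⟩
    exact (hmp.integrable_comp aestronglyMeasurable_id).mpr integrable_id_gaussianReal
  have hint : Integrable (fun x : Fin d → ℝ => w ⬝ᵥ x) γ := by
    show Integrable (fun x : Fin d → ℝ => ∑ i, w i * x i) γ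
    exact integrable_finset_sum _ fun i _ => ((hint_eval i).const_mul (w i))
  -- the linear part integrates to zero by symmetry
  have hIzero : ∫ x, w ⬝ᵥ x ∂γ = 0 := by
    have hneg : MeasurePreserving (fun x : Fin d → ℝ => -x) γ γ :=
      measurePreserving_pi (fun _ : Fin d => gaussianReal 0 1)
        (fun _ : Fin d => gaussianReal 0 1) (fun _ => measurePreserving_neg_gaussian)
    have hwcont : Continuous fun x : Fin d → ℝ => w ⬝ᵥ x := by
      show Continuous fun x : Fin d → ℝ => ∑ i, w i * x i
      fun_prop
    have h0 : ∫ x, w ⬝ᵥ x ∂γ = ∫ x, w ⬝ᵥ (-x) ∂γ := by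
      nth_rewrite 1 [← hneg.map_eq]
      exact integral_map hneg.measurable.aemeasurable hwcont.aestronglyMeasurable
    simp only [dotProduct_neg, integral_neg] at h0
    linarith
  rw [integral_add (integrable_const _) hint, integral_const, hIzero, add_zero]
  simp only [measure_univ, probReal_univ, ENNReal.toReal_one, one_smul, smul_eq_mul]
  rw [hc]
  ring
end

section
/- Let f : (0,∞) → ℝ be convex and let μ, ν be finite nonnegative measures with μ ≪ ν on (X, F). For a measurable map Γ : (X,F) → (Y,G) let μΓ⁻¹, νΓ⁻¹ denote the pushforward measures. Then the generalized f-divergence satisfies the data-processing inequality D_f(μ, ν) ≥ D_f(μΓ⁻¹, νΓ⁻¹). -/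
open MeasureTheory

open Filter Topology

lemma support_line {f : ℝ → ℝ} (hf : ConvexOn ℝ (Set.Ici 0) f) {q : ℝ} (hq : 0 < q) :
    ∃ c : ℝ, ∀ t ∈ Set.Ici (0:ℝ), f q + c * (t - q) ≤ f t := by
  have hqmem : q ∈ Set.Ici (0:ℝ) := le_of_lt hq
  set S : Set ℝ := (fun s => (f s - f q) / (s - q)) '' Set.Ico 0 q with hS
  have hne : S.Nonempty := ⟨_, ⟨0, ⟨le_refl _, hq⟩, rfl⟩⟩
  have hbdd : BddAbove S := by
    refine ⟨(f (q+1) - f q) / (q+1-q), ?_⟩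
    rintro _ ⟨s, hs, rfl⟩
    exact hf.secant_mono hqmem hs.1 (by positivity : (0:ℝ) ≤ q+1) (ne_of_lt hs.2)
      (by linarith) (by linarith [hs.2])
  refine ⟨sSup S, ?_⟩
  intro t ht
  rcases lt_trichotomy t q with h | h | h
  · have hle : (f t - f q) / (t - q) ≤ sSup S := le_csSup hbdd ⟨t, ⟨ht, h⟩, rfl⟩
    have h1 : t - q < 0 := by linarith
    rw [div_le_iff_of_neg h1] at hle
    linarith
  · subst h; simp
  · have hub : ∀ y ∈ S, y ≤ (f t - f q) / (t - q) := by
      rintro _ ⟨s, hs, rfl⟩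
      exact hf.secant_mono hqmem hs.1 ht (ne_of_lt hs.2) (ne_of_gt h) (by linarith [hs.2])
    have hle := csSup_le hne hub
    rw [le_div_iff₀ (by linarith : (0:ℝ) < t - q)] at hle
    linarith


lemma tendsto_support {f : ℝ → ℝ} (hf : ConvexOn ℝ (Set.Ici 0) f) (c : ℚ → ℝ)
    (hc : ∀ q : ℚ, 0 < (q:ℝ) → ∀ t ∈ Set.Ici (0:ℝ), f q + c q * (t - (q:ℝ)) ≤ f t)
    {t₀ M : ℝ} (ht₀ : 0 < t₀) (hM : ∀ q : ℚ, 0 < (q:ℝ) → f q + c q * (t₀ - (q:ℝ)) ≤ M) :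
    f t₀ ≤ M := by
  have hfc : ContinuousAt f t₀ := by
    have hcvx : ConvexOn ℝ (Set.Ioi (0:ℝ)) f := hf.subset Set.Ioi_subset_Ici_self (convex_Ioi 0)
    exact (hcvx.continuousOn isOpen_Ioi).continuousAt (Ioi_mem_nhds ht₀)
  -- choose rational sequence
  have hex : ∀ n : ℕ, ∃ q : ℚ, max (t₀ - 1/(n+1)) (t₀/2) < (q:ℝ) ∧ (q:ℝ) < t₀ := by
    intro n
    refine exists_rat_btwn ?_
    apply max_lt
    · have : (0:ℝ) < 1/(n+1) := by positivity
      linarith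
    · linarith
  choose qs hq1 hq2 using hex
  have hq_pos : ∀ n, 0 < ((qs n : ℝ)) := fun n =>
    lt_of_le_of_lt (by linarith : (0:ℝ) ≤ t₀/2) (lt_of_le_of_lt (le_max_right _ _) (hq1 n))
  have hq_half : ∀ n, t₀/2 < (qs n : ℝ) := fun n => lt_of_le_of_lt (le_max_right _ _) (hq1 n)
  have hq_tendsto : Tendsto (fun n => ((qs n : ℝ))) atTop (𝓝 t₀) := by
    refine tendsto_of_tendsto_of_tendsto_of_le_of_le (g := fun n : ℕ => t₀ - 1/(n+1))
      (h := fun _ : ℕ => t₀) ?_ tendsto_const_nhds ?_ ?_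
    · have : Tendsto (fun n : ℕ => 1 / ((n:ℝ) + 1)) atTop (𝓝 0) := tendsto_one_div_add_atTop_nhds_zero_nat
      have h2 : Tendsto (fun n : ℕ => t₀ - 1/(n+1)) atTop (𝓝 (t₀ - 0)) :=
        tendsto_const_nhds.sub this
      simpa using h2
    · intro n; exact le_of_lt (lt_of_le_of_lt (le_max_left _ _) (hq1 n))
    · intro n; exact le_of_lt (hq2 n)
  have hfq : Tendsto (fun n => f (qs n)) atTop (𝓝 (f t₀)) := hfc.tendsto.comp hq_tendsto
  set u := t₀/4 with hu
  -- lower bound on the LHS terms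
  have hlow : ∀ n, f (qs n) + (f (qs n) - f u) / ((qs n : ℝ) - u) * (t₀ - qs n)
      ≤ f (qs n) + c (qs n) * (t₀ - (qs n : ℝ)) := by
    intro n
    have hsup := hc (qs n) (hq_pos n) u (by simp [hu]; linarith)
    -- f u ≥ f qn + c qn (u - qn), with u - qn < 0
    have hneg : u - (qs n : ℝ) < 0 := by
      have := hq_half n; simp only [hu]; linarith
    have hcn : (f (qs n) - f u) / ((qs n : ℝ) - u) ≤ c (qs n) := by
      rw [div_le_iff₀ (by linarith : (0:ℝ) < (qs n : ℝ) - u)]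
      nlinarith [hsup]
    have hnn : (0:ℝ) ≤ t₀ - qs n := by linarith [hq2 n]
    nlinarith [mul_le_mul_of_nonneg_right hcn hnn]
  have hup : ∀ n, f (qs n) + c (qs n) * (t₀ - (qs n : ℝ)) ≤ f t₀ := fun n =>
    hc (qs n) (hq_pos n) t₀ (le_of_lt ht₀)
  -- the lower bound tends to f t₀
  have hlow_tendsto : Tendsto
      (fun n => f (qs n) + (f (qs n) - f u) / ((qs n : ℝ) - u) * (t₀ - qs n)) atTop (𝓝 (f t₀)) := by
    have h1 : Tendsto (fun n => (f (qs n) - f u) / ((qs n : ℝ) - u)) atTop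
        (𝓝 ((f t₀ - f u) / (t₀ - u))) := by
      refine Tendsto.div (hfq.sub tendsto_const_nhds) (hq_tendsto.sub tendsto_const_nhds) ?_
      simp only [hu]; intro h; linarith [sub_eq_zero.mp h]
    have h2 : Tendsto (fun n => t₀ - (qs n : ℝ)) atTop (𝓝 0) := by
      have := tendsto_const_nhds (x := t₀) (f := atTop (α := ℕ)) |>.sub hq_tendsto
      simpa using this
    have := hfq.add (h1.mul h2)
    simpa using this
  have hmain : Tendsto (fun n => f (qs n) + c (qs n) * (t₀ - (qs n : ℝ))) atTop (𝓝 (f t₀)) :=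
    tendsto_of_tendsto_of_tendsto_of_le_of_le hlow_tendsto tendsto_const_nhds hlow hup
  exact le_of_tendsto hmain (Eventually.of_forall fun n => hM (qs n) (hq_pos n))


noncomputable def fext (f : ℝ → ℝ) : ℝ → ℝ := (Set.Ioi (0:ℝ)).piecewise f (fun _ => f 0)

lemma fext_eq (f : ℝ → ℝ) {t : ℝ} (ht : 0 ≤ t) : fext f t = f t := by
  rcases eq_or_lt_of_le ht with h | h
  · simp [fext, Set.piecewise, ← h]
  · simp [fext, Set.piecewise, h]

lemma fext_meas {f : ℝ → ℝ} (hf : ConvexOn ℝ (Set.Ici 0) f) : Measurable (fext f) := by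
  have hcvx : ConvexOn ℝ (Set.Ioi (0:ℝ)) f := hf.subset Set.Ioi_subset_Ici_self (convex_Ioi 0)
  exact ContinuousOn.measurable_piecewise (hcvx.continuousOn isOpen_Ioi) continuousOn_const
    measurableSet_Ioi

theorem cond_jensen {X : Type*} {m : MeasurableSpace X} [mX : MeasurableSpace X] (hm : m ≤ mX)
    (ν : Measure X) [IsFiniteMeasure ν] {f : ℝ → ℝ} (hf : ConvexOn ℝ (Set.Ici 0) f)
    (support_line : ∀ {q : ℝ}, 0 < q → ∃ c : ℝ, ∀ t ∈ Set.Ici (0:ℝ), f q + c * (t - q) ≤ f t)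
    (tendsto_support : ∀ (c : ℚ → ℝ),
      (∀ q : ℚ, 0 < (q:ℝ) → ∀ t ∈ Set.Ici (0:ℝ), f q + c q * (t - (q:ℝ)) ≤ f t) →
      ∀ {t₀ M : ℝ}, 0 < t₀ → (∀ q : ℚ, 0 < (q:ℝ) → f q + c q * (t₀ - (q:ℝ)) ≤ M) → f t₀ ≤ M)
    {r : X → ℝ} (hr_nonneg : ∀ x, 0 ≤ r x) (hr_int : Integrable r ν)
    (hint : Integrable (fun x => f (r x)) ν) :
    ∀ᵐ x ∂ν, f ((ν[r|m]) x) ≤ (ν[fun x => f (r x)|m]) x := by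
  classical
  haveI : SigmaFinite (ν.trim hm) := inferInstance
  have hE_int : Integrable (ν[r|m]) ν := integrable_condExp
  have hE_nonneg : 0 ≤ᵐ[ν] ν[r|m] := condExp_nonneg (Eventually.of_forall hr_nonneg)
  -- choose support line slopes for rationals
  have hcex : ∀ q : ℚ, ∃ c : ℝ, 0 < (q:ℝ) → ∀ t ∈ Set.Ici (0:ℝ), f q + c * (t - (q:ℝ)) ≤ f t := by
    intro q
    by_cases h : 0 < (q:ℝ)
    · exact (support_line h).imp fun c hc _ => hc
    · exact ⟨0, fun h' => absurd h' h⟩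
  choose c hc using hcex
  -- the conditional inequality for each rational
  have key : ∀ q : ℚ, 0 < (q:ℝ) →
      ∀ᵐ x ∂ν, f q + c q * ((ν[r|m]) x - q) ≤ (ν[fun x => f (r x)|m]) x := by
    intro q hq
    have int1 : Integrable (fun x => f q + c q * (r x - q)) ν := by
      have heq : (fun x => f (q:ℝ) + c q * (r x - q)) =
          fun x => (f q - c q * q) + c q * r x := by funext x; ring
      rw [heq]; exact (integrable_const _).add (hr_int.const_mul _)
    have h1 : (fun x => f q + c q * (r x - q)) ≤ᵐ[ν] fun x => f (r x) :=
      Eventually.of_forall fun x => hc q hq _ (hr_nonneg x)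
    have h2 := condExp_mono (m := m) int1 hint h1
    have h3 : ν[(fun x => f (q:ℝ) + c q * (r x - q))|m] =ᵐ[ν]
        fun x => (f q - c q * q) + c q * (ν[r|m]) x := by
      have heq : (fun x => f (q:ℝ) + c q * (r x - q)) =
          (fun _ => f (q:ℝ) - c q * q) + (c q) • r := by
        funext x; simp [Pi.add_apply]; ring
      rw [heq]
      calc ν[(fun _ => f (q:ℝ) - c q * q) + (c q) • r|m]
          =ᵐ[ν] ν[(fun _ => f (q:ℝ) - c q * q)|m] + ν[(c q) • r|m] :=
            condExp_add (integrable_const _) (hr_int.smul _) m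
        _ =ᵐ[ν] fun x => (f q - c q * q) + c q * (ν[r|m]) x := by
            filter_upwards [condExp_smul (m := m) (μ := ν) (c q) r] with x hx2
            simp only [Pi.add_apply, condExp_const hm, hx2, Pi.smul_apply, smul_eq_mul]
    filter_upwards [h2, h3] with x h2x h3x
    rw [h3x] at h2x
    linarith
  -- the zero set
  set A : Set X := {x | (ν[r|m]) x ≤ 0} with hA_def
  have hA_m : MeasurableSet[m] A := by
    have : A = (ν[r|m]) ⁻¹' Set.Iic 0 := rfl
    rw [this]
    exact stronglyMeasurable_condExp.measurable measurableSet_Iic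
  have hEA0 : (ν[r|m]) =ᵐ[ν.restrict A] 0 := by
    have h1 : ∀ᵐ x ∂ν.restrict A, (ν[r|m]) x ≤ 0 :=
      (ae_restrict_mem (hm _ hA_m)).mono fun x hx => hx
    have h2 : 0 ≤ᵐ[ν.restrict A] (ν[r|m]) := ae_restrict_of_ae hE_nonneg
    filter_upwards [h1, h2] with x hx1 hx2
    exact le_antisymm hx1 hx2
  have hr0A : r =ᵐ[ν.restrict A] 0 := by
    have hint0 : ∫ x in A, r x ∂ν = 0 := by
      rw [setIntegral_condExp hm hr_int hA_m |>.symm, integral_congr_ae hEA0]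
      simp
    exact (integral_eq_zero_iff_of_nonneg hr_nonneg hr_int.integrableOn).mp hint0
  have hfr0A : (fun x => f (r x) - f 0) =ᵐ[ν.restrict A] 0 := by
    filter_upwards [hr0A] with x hx
    simp only [Pi.zero_apply] at hx ⊢
    rw [hx, sub_self]
  -- locality: the condexp of f∘r - f 0 is nonneg a.e. on A
  have hD_int : Integrable (fun x => f (r x) - f 0) ν := hint.sub (integrable_const _)
  set D : X → ℝ := ν[fun x => f (r x) - f 0|m] with hD_def
  have hDpos : ∀ᵐ x ∂ν, x ∈ A → 0 ≤ D x := by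
    set B : Set X := A ∩ {x | D x < 0} with hB_def
    have hB_m : MeasurableSet[m] B := by
      refine MeasurableSet.inter hA_m ?_
      have : {x | D x < 0} = D ⁻¹' Set.Iio 0 := rfl
      rw [this]
      exact stronglyMeasurable_condExp.measurable measurableSet_Iio
    have hBmeas : MeasurableSet B := hm _ hB_m
    have hintB : ∫ x in B, D x ∂ν = 0 := by
      rw [setIntegral_condExp hm hD_int hB_m]
      have : (fun x => f (r x) - f 0) =ᵐ[ν.restrict B] 0 :=
        ae_restrict_of_ae_restrict_of_subset Set.inter_subset_left hfr0A
      rw [integral_congr_ae this]; simp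
    have hDnegB : ∀ᵐ x ∂ν.restrict B, 0 ≤ -D x :=
      (ae_restrict_mem hBmeas).mono fun x hx => by
        simp only [hB_def, Set.mem_inter_iff, Set.mem_setOf_eq] at hx
        linarith [hx.2]
    have hzero : (fun x => -D x) =ᵐ[ν.restrict B] 0 := by
      refine (integral_eq_zero_iff_of_nonneg_ae hDnegB
        (integrable_condExp.integrableOn.neg)).mp ?_
      rw [integral_neg, hintB, neg_zero]
    have hfalse : ∀ᵐ x ∂ν.restrict B, False := by
      filter_upwards [(ae_restrict_mem hBmeas), hzero] with x hx hzx
      simp only [hB_def, Set.mem_inter_iff, Set.mem_setOf_eq] at hx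
      simp only [Pi.zero_apply] at hzx
      linarith [hx.2]
    have hBnull : ν B = 0 := by
      have := hfalse
      rw [ae_iff] at this
      simpa [Measure.restrict_apply_univ] using this
    have : ∀ᵐ x ∂ν, x ∉ B := by
      rw [ae_iff]; simpa using hBnull
    filter_upwards [this] with x hx hxA
    by_contra hneg
    exact hx ⟨hxA, not_le.mp hneg⟩
  have hDF : D =ᵐ[ν] fun x => (ν[fun x => f (r x)|m]) x - f 0 := by
    calc D =ᵐ[ν] ν[fun x => f (r x)|m] - ν[fun _ => f 0|m] :=
          condExp_sub hint (integrable_const _) m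
      _ =ᵐ[ν] fun x => (ν[fun x => f (r x)|m]) x - f 0 := by
          rw [condExp_const hm]
          exact Filter.Eventually.of_forall fun x => by simp [Pi.sub_apply]
  have hFA : ∀ᵐ x ∂ν, x ∈ A → f 0 ≤ (ν[fun x => f (r x)|m]) x := by
    filter_upwards [hDpos, hDF] with x hx hDFx hxA
    have h0 := hx hxA
    rw [hDFx] at h0
    linarith
  -- combine
  have hkey : ∀ᵐ x ∂ν, ∀ q : ℚ, 0 < (q:ℝ) →
      f q + c q * ((ν[r|m]) x - q) ≤ (ν[fun x => f (r x)|m]) x := by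
    rw [ae_all_iff]
    intro q
    by_cases hq : 0 < (q:ℝ)
    · exact (key q hq).mono fun x h _ => h
    · exact Eventually.of_forall fun x h => absurd h hq
  filter_upwards [hkey, hE_nonneg, hFA] with x hx hEx hFx
  rcases eq_or_lt_of_le hEx with h0 | h0
  · rw [← h0]
    exact hFx (by simp [hA_def, ← h0])
  · exact tendsto_support c hc h0 fun q hq => hx q hq

/-- Data-processing inequality for generalized `f`-divergences of finite nonnegative
measures: for convex `f`, `μ ≪ ν`, and measurable `Γ`,
`D_f(μΓ⁻¹, νΓ⁻¹) ≤ D_f(μ, ν)`. -/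
theorem stmt15 {X Y : Type*} [MeasurableSpace X] [MeasurableSpace Y]
    (μ ν : Measure X) [IsFiniteMeasure μ] [IsFiniteMeasure ν] (hac : μ ≪ ν)
    (f : ℝ → ℝ) (hf : ConvexOn ℝ (Set.Ici 0) f)
    (Γ : X → Y) (hΓ : Measurable Γ)
    (hint : Integrable (fun x => f ((μ.rnDeriv ν x).toReal)) ν) :
    ∫ y, f (((μ.map Γ).rnDeriv (ν.map Γ) y).toReal) ∂(ν.map Γ)
      ≤ ∫ x, f ((μ.rnDeriv ν x).toReal) ∂ν := by
  classical
  haveI : IsFiniteMeasure (μ.map Γ) := Measure.isFiniteMeasure_map μ Γ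
  haveI : IsFiniteMeasure (ν.map Γ) := Measure.isFiniteMeasure_map ν Γ
  have hm : MeasurableSpace.comap Γ inferInstance ≤ ‹MeasurableSpace X› := hΓ.comap_le
  set r : X → ℝ := fun x => (μ.rnDeriv ν x).toReal with hr_def
  have hr_int : Integrable r ν := Measure.integrable_toReal_rnDeriv
  have hr_nonneg : ∀ x, 0 ≤ r x := fun _ => ENNReal.toReal_nonneg
  set g : Y → ℝ := fun y => ((μ.map Γ).rnDeriv (ν.map Γ) y).toReal with hg_def
  have hg_meas : Measurable g := (Measure.measurable_rnDeriv _ _).ennreal_toReal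
  have hg_nonneg : ∀ y, 0 ≤ g y := fun _ => ENNReal.toReal_nonneg
  have hacY : μ.map Γ ≪ ν.map Γ := hac.map hΓ
  have hg_int : Integrable g (ν.map Γ) := Measure.integrable_toReal_rnDeriv
  have hgΓ_int : Integrable (fun x => g (Γ x)) ν :=
    (integrable_map_measure hg_meas.aestronglyMeasurable hΓ.aemeasurable).mp hg_int
  have hΓm : Measurable[MeasurableSpace.comap Γ inferInstance] Γ := Measurable.of_comap_le le_rfl
  haveI : SigmaFinite (ν.trim hm) := inferInstance
  -- identify g ∘ Γ with the conditional expectation of r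
  have hB : (fun x => g (Γ x)) =ᵐ[ν] ν[r|MeasurableSpace.comap Γ inferInstance] := by
    refine ae_eq_condExp_of_forall_setIntegral_eq hm hr_int
      (fun s hs _ => hgΓ_int.integrableOn) ?_ ?_
    · rintro s ⟨B, hBmeas, rfl⟩ -
      have h1 : ∫ x in Γ ⁻¹' B, g (Γ x) ∂ν = ∫ y in B, g y ∂(ν.map Γ) :=
        (setIntegral_map hBmeas hg_meas.aestronglyMeasurable hΓ.aemeasurable).symm
      rw [h1, Measure.setIntegral_toReal_rnDeriv hacY B,
        Measure.setIntegral_toReal_rnDeriv hac (Γ ⁻¹' B), map_measureReal_apply hΓ hBmeas]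
    · exact StronglyMeasurable.aestronglyMeasurable ((hg_meas.comp hΓm).stronglyMeasurable)
  have jensen := cond_jensen hm ν hf (fun {q} hq => support_line hf hq)
    (fun c hc {t₀ M} ht₀ hM => tendsto_support hf c hc ht₀ hM) hr_nonneg hr_int hint
  set F := ν[fun x => f (r x)|MeasurableSpace.comap Γ inferInstance] with hF_def
  set E := ν[r|MeasurableSpace.comap Γ inferInstance] with hE_def
  have hF_int : Integrable F ν := integrable_condExp
  have hE_int : Integrable E ν := integrable_condExp
  have hE_nonneg : 0 ≤ᵐ[ν] E := condExp_nonneg (Filter.Eventually.of_forall hr_nonneg)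
  -- measurability of f ∘ g
  have hfg_meas : AEStronglyMeasurable (fun y => f (g y)) (ν.map Γ) := by
    have heq : (fun y => f (g y)) = fun y => fext f (g y) :=
      funext fun y => (fext_eq f (hg_nonneg y)).symm
    rw [heq]
    exact ((fext_meas hf).comp hg_meas).aestronglyMeasurable
  have step1 : ∫ y, f (g y) ∂(ν.map Γ) = ∫ x, f (g (Γ x)) ∂ν :=
    integral_map hΓ.aemeasurable hfg_meas
  have step2 : ∫ x, f (g (Γ x)) ∂ν = ∫ x, f (E x) ∂ν :=
    integral_congr_ae (hB.mono fun x hx => by dsimp only at hx ⊢; rw [hx])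
  -- integrability of f ∘ E
  obtain ⟨c₁, hc₁⟩ := support_line hf one_pos
  have hfE_meas : AEStronglyMeasurable (fun x => f (E x)) ν := by
    have hEmeas : Measurable E :=
      (stronglyMeasurable_condExp.mono hm).measurable
    refine (((fext_meas hf).comp hEmeas).aestronglyMeasurable).congr ?_
    filter_upwards [hE_nonneg] with x hx
    exact fext_eq f hx
  have hfE_int : Integrable (fun x => f (E x)) ν := by
    refine Integrable.mono'
      (hF_int.abs.add ((hE_int.const_mul c₁).add (integrable_const (f 1 - c₁ * 1))).abs)
      hfE_meas ?_
    filter_upwards [jensen, hE_nonneg] with x h1 h2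
    have low : f 1 + c₁ * (E x - 1) ≤ f (E x) := hc₁ _ h2
    have hup : f (E x) ≤ F x := h1
    simp only [Pi.add_apply]
    rw [Real.norm_eq_abs, abs_le]
    constructor
    · have hlow2 : c₁ * E x + (f 1 - c₁ * 1) ≤ f (E x) := by linarith [low]
      linarith [neg_abs_le (c₁ * E x + (f 1 - c₁ * 1)), abs_nonneg (F x)]
    · linarith [le_abs_self (F x), abs_nonneg (c₁ * E x + (f 1 - c₁ * 1))]
  have step3 : ∫ x, f (E x) ∂ν ≤ ∫ x, F x ∂ν := integral_mono_ae hfE_int hF_int jensen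
  have step4 : ∫ x, F x ∂ν = ∫ x, f (r x) ∂ν := integral_condExp hm
  calc ∫ y, f (g y) ∂(ν.map Γ) = ∫ x, f (g (Γ x)) ∂ν := step1
    _ = ∫ x, f (E x) ∂ν := step2
    _ ≤ ∫ x, F x ∂ν := step3
    _ = ∫ x, f (r x) ∂ν := step4
end

section
/- Let P and Q be probability measures on (X,F) with P̄_A ≤ P a truncated measure of the form P̄_A(B) := P̄(B ∩ 'good event') satisfying P̄ - P̄_A ≥ 0 and P̄_A(X) = p, where P̄ is a probability measure with P̄_A ≪ Q. Then the total variation distance satisfies ‖Q - P̄‖_TV ≤ (1/2)·√( E_Q[(dP̄_A/dQ)²] - 1 ) + ( √(2(1-p)) + (1-p) )/2. -/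
open MeasureTheory

/-- Total variation distance between finite measures:
`‖μ - ν‖_TV = (1/2) ∫ |dμ - dν|`. -/
noncomputable def tvDist {X : Type*} [MeasurableSpace X] (μ ν : Measure X)
    [IsFiniteMeasure μ] [IsFiniteMeasure ν] : ℝ :=
  (1 / 2) * ((μ.toSignedMeasure - ν.toSignedMeasure).totalVariation Set.univ).toReal

lemma tv_repr {X : Type*} [MeasurableSpace X] (s : SignedMeasure X) :
    ∃ B : Set X, MeasurableSet B ∧
      ((s.totalVariation Set.univ).toReal = s B - s Bᶜ) := by
  obtain ⟨i, hi₁, hi₂, hi₃, hpos, hneg⟩ := s.toJordanDecomposition_spec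
  refine ⟨i, hi₁, ?_⟩
  rw [SignedMeasure.totalVariation, Measure.add_apply, hpos, hneg,
    SignedMeasure.toMeasureOfZeroLE_apply _ hi₂ hi₁ MeasurableSet.univ,
    SignedMeasure.toMeasureOfLEZero_apply _ hi₃ hi₁.compl MeasurableSet.univ]
  rw [ENNReal.toReal_add ENNReal.coe_ne_top ENNReal.coe_ne_top]
  simp [Set.inter_univ]
  ring

lemma sqrt_add_le (a b : ℝ) (hb : 0 ≤ b) :
    Real.sqrt (a + b) ≤ Real.sqrt a + Real.sqrt b := by
  rcases le_or_gt a 0 with ha | ha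
  · calc Real.sqrt (a + b) ≤ Real.sqrt b := Real.sqrt_le_sqrt (by linarith)
    _ ≤ Real.sqrt a + Real.sqrt b := le_add_of_nonneg_left (Real.sqrt_nonneg a)
  · have h : a + b ≤ (Real.sqrt a + Real.sqrt b) ^ 2 := by
      rw [add_sq, Real.sq_sqrt ha.le, Real.sq_sqrt hb]
      have : 0 ≤ 2 * Real.sqrt a * Real.sqrt b := by positivity
      linarith
    calc Real.sqrt (a + b) ≤ Real.sqrt ((Real.sqrt a + Real.sqrt b) ^ 2) :=
          Real.sqrt_le_sqrt h
      _ = Real.sqrt a + Real.sqrt b := Real.sqrt_sq (by positivity)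

theorem stmt16' {X : Type*} [MeasurableSpace X] (Pbar PA Q : Measure X)
    [IsProbabilityMeasure Pbar] [IsProbabilityMeasure Q] [IsFiniteMeasure PA]
    (hle : PA ≤ Pbar) (hac : PA ≪ Q)
    (p : ℝ) (hp : p = (PA Set.univ).toReal)
    (hint : Integrable (fun x => ((PA.rnDeriv Q x).toReal) ^ 2) Q) :
    (1 / 2) * ((Q.toSignedMeasure - Pbar.toSignedMeasure).totalVariation Set.univ).toReal
      ≤ (1 / 2) * Real.sqrt ((∫ x, ((PA.rnDeriv Q x).toReal) ^ 2 ∂Q) - 1)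
        + (Real.sqrt (2 * (1 - p)) + (1 - p)) / 2 := by
  set f : X → ℝ := fun x => (PA.rnDeriv Q x).toReal with hf
  have hfmeas : Measurable f := (Measure.measurable_rnDeriv PA Q).ennreal_toReal
  have hfint : Integrable f Q := Measure.integrable_toReal_rnDeriv
  have hfp : ∫ x, f x ∂Q = p := by rw [hp]; exact Measure.integral_toReal_rnDeriv hac
  have hp0 : 0 ≤ p := by rw [hp]; exact ENNReal.toReal_nonneg
  have hp1 : p ≤ 1 := by
    rw [hp]
    have h1 : PA Set.univ ≤ Pbar Set.univ := Measure.le_iff'.1 hle Set.univ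
    have : (PA Set.univ).toReal ≤ (Pbar Set.univ).toReal :=
      ENNReal.toReal_mono (measure_ne_top _ _) h1
    simpa using this
  set g : X → ℝ := fun x => 1 - f x with hg
  have hgmeas : Measurable g := measurable_const.sub hfmeas
  have hgint : Integrable g Q := (integrable_const 1).sub hfint
  have hg2int : Integrable (fun x => g x ^ 2) Q := by
    have : (fun x => g x ^ 2) = fun x => 1 - 2 * f x + f x ^ 2 := by
      funext x; simp only [hg]; ring
    rw [this]
    exact ((integrable_const 1).sub (hfint.const_mul 2)).add hint
  have hg2 : ∫ x, g x ^ 2 ∂Q = 1 - 2 * p + ∫ x, f x ^ 2 ∂Q := by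
    have : (fun x => g x ^ 2) = fun x => 1 - 2 * f x + f x ^ 2 := by
      funext x; simp only [hg]; ring
    have hA : Integrable (fun x => 1 - 2 * f x) Q := (integrable_const 1).sub (hfint.const_mul 2)
    rw [this, integral_add hA hint,
      integral_sub (integrable_const 1) (hfint.const_mul 2), integral_const,
      integral_const_mul, hfp]
    simp
    rfl
  -- L1-L2 inequality
  have habs : ∫ x, |g x| ∂Q ≤ Real.sqrt (∫ x, g x ^ 2 ∂Q) := by
    have hmem : MemLp (fun x => |g x|) 2 Q := by
      refine (memLp_two_iff_integrable_sq hgmeas.abs.aestronglyMeasurable).2 ?_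
      simpa [sq_abs] using hg2int
    have hv := ProbabilityTheory.variance_nonneg (fun x => |g x|) Q
    rw [ProbabilityTheory.variance_eq_sub hmem] at hv
    have hsq : (∫ x, |g x| ∂Q) ^ 2 ≤ ∫ x, g x ^ 2 ∂Q := by
      have : ∫ x, |g x| ^ 2 ∂Q = ∫ x, g x ^ 2 ∂Q := by simp [sq_abs]
      simpa [this] using hv
    have h0 : 0 ≤ ∫ x, |g x| ∂Q := integral_nonneg fun x => abs_nonneg _
    calc ∫ x, |g x| ∂Q = Real.sqrt ((∫ x, |g x| ∂Q) ^ 2) := (Real.sqrt_sq h0).symm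
      _ ≤ Real.sqrt (∫ x, g x ^ 2 ∂Q) := Real.sqrt_le_sqrt hsq
  -- TV bound
  obtain ⟨B, hB, htv⟩ := tv_repr (Q.toSignedMeasure - Pbar.toSignedMeasure)
  rw [htv, Measure.toSignedMeasure_sub_apply hB, Measure.toSignedMeasure_sub_apply hB.compl]
  -- real values
  set qB := (Q B).toReal
  set qBc := (Q Bᶜ).toReal
  set pB := (Pbar B).toReal
  set pBc := (Pbar Bᶜ).toReal
  set aB := (PA B).toReal
  set aBc := (PA Bᶜ).toReal
  have hQsum : qB + qBc = 1 := by
    rw [← ENNReal.toReal_add (measure_ne_top _ _) (measure_ne_top _ _),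
      measure_add_measure_compl hB]
    simp
  have hPsum : pB + pBc = 1 := by
    rw [← ENNReal.toReal_add (measure_ne_top _ _) (measure_ne_top _ _),
      measure_add_measure_compl hB]
    simp
  have hAsum : aB + aBc = p := by
    rw [hp, ← ENNReal.toReal_add (measure_ne_top _ _) (measure_ne_top _ _),
      measure_add_measure_compl hB]
  have hAB : aB ≤ pB := ENNReal.toReal_mono (measure_ne_top _ _) (Measure.le_iff'.1 hle B)
  have hABc : aBc ≤ pBc := ENNReal.toReal_mono (measure_ne_top _ _) (Measure.le_iff'.1 hle Bᶜ)
  -- set integrals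
  have hsetB : qB - aB = ∫ x in B, g x ∂Q := by
    rw [integral_sub (integrable_const 1).integrableOn hfint.integrableOn]
    rw [setIntegral_const, Measure.setIntegral_toReal_rnDeriv hac]
    simp
    rfl
  have hsetBc : qBc - aBc = ∫ x in Bᶜ, g x ∂Q := by
    rw [integral_sub (integrable_const 1).integrableOn hfint.integrableOn]
    rw [setIntegral_const, Measure.setIntegral_toReal_rnDeriv hac]
    simp
    rfl
  have habsint : Integrable (fun x => |g x|) Q := hgint.abs
  have h1 : ∫ x in B, g x ∂Q ≤ ∫ x in B, |g x| ∂Q :=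
    integral_mono hgint.integrableOn habsint.integrableOn fun x => le_abs_self _
  have h2 : -∫ x in Bᶜ, g x ∂Q ≤ ∫ x in Bᶜ, |g x| ∂Q := by
    rw [← integral_neg]
    exact integral_mono hgint.neg.integrableOn habsint.integrableOn fun x => neg_le_abs _
  have hsplit : ∫ x in B, |g x| ∂Q + ∫ x in Bᶜ, |g x| ∂Q = ∫ x, |g x| ∂Q :=
    integral_add_compl hB habsint
  -- main chain
  have key : (qB - pB) - (qBc - pBc) ≤ ∫ x, |g x| ∂Q + (1 - p) := by
    have e1 : ∫ x in B, g x ∂Q - ∫ x in Bᶜ, g x ∂Q ≤ ∫ x, |g x| ∂Q := by linarith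
    nlinarith [e1, hsetB, hsetBc]
  have final : ∫ x, |g x| ∂Q ≤
      Real.sqrt ((∫ x, f x ^ 2 ∂Q) - 1) + Real.sqrt (2 * (1 - p)) := by
    have : ∫ x, g x ^ 2 ∂Q = ((∫ x, f x ^ 2 ∂Q) - 1) + 2 * (1 - p) := by
      rw [hg2]; ring
    calc ∫ x, |g x| ∂Q ≤ Real.sqrt (∫ x, g x ^ 2 ∂Q) := habs
      _ = Real.sqrt (((∫ x, f x ^ 2 ∂Q) - 1) + 2 * (1 - p)) := by rw [this]
      _ ≤ Real.sqrt ((∫ x, f x ^ 2 ∂Q) - 1) + Real.sqrt (2 * (1 - p)) :=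
          sqrt_add_le _ _ (by linarith)
  have hre : Q.real B - Pbar.real B - (Q.real Bᶜ - Pbar.real Bᶜ) = (qB - pB) - (qBc - pBc) := rfl
  linarith

/-- Truncated χ² bound on the total variation distance:
if `P̄` is a probability measure, `P̄_A ≤ P̄` a truncated version with mass `p`, and
`P̄_A ≪ Q` for a probability measure `Q`, then
`‖Q - P̄‖_TV ≤ ½ √(E_Q[(dP̄_A/dQ)²] - 1) + (√(2(1-p)) + (1-p))/2`. -/
theorem stmt16 {X : Type*} [MeasurableSpace X] (Pbar PA Q : Measure X)
    [IsProbabilityMeasure Pbar] [IsProbabilityMeasure Q] [IsFiniteMeasure PA]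
    (hle : PA ≤ Pbar) (hac : PA ≪ Q)
    (p : ℝ) (hp : p = (PA Set.univ).toReal)
    (hint : Integrable (fun x => ((PA.rnDeriv Q x).toReal) ^ 2) Q) :
    tvDist Q Pbar
      ≤ (1 / 2) * Real.sqrt ((∫ x, ((PA.rnDeriv Q x).toReal) ^ 2 ∂Q) - 1)
        + (Real.sqrt (2 * (1 - p)) + (1 - p)) / 2 := by
  unfold tvDist
  exact stmt16' Pbar PA Q hle hac p hp hint
end

section
/- Let P be a prior probability distribution on a parameter space Θ, {P_θ}_{θ∈Θ} a family of probability measures on (X,F), {A_θ} a measurable family of events in F, A an action space, L : A × Θ → {0,1} a loss, and 𝔞 : X → A measurable. Define V^𝔞 := E_{θ∼P} P_θ[{L(𝔞(X),θ)=0} ∩ A_θ] and V₀ := sup_{a∈A} P_{θ∼P}[L(a,θ)=0]. Then for any probability measure Q on (X,F) with P_θ[·∩A_θ] ≪ Q for P-a.e. θ, V^𝔞 ≤ V₀ + √( V₀(1-V₀) · E_{θ∼P} ∫ (dP_θ[·;A_θ]/dQ)² dQ ). -/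
open MeasureTheory ProbabilityTheory

/-- Truncated χ² analogue of Fano's inequality (generalized Bayes-risk bound):
with prior `P` on `Θ`, Markov kernel `κ` of data distributions, truncation events `A θ`,
binary loss `L`, decision rule `𝔞`, value `V = E_{θ∼P} P_θ[{L(𝔞(X),θ)=0} ; A_θ]` and
`V₀ = sup_a P_{θ∼P}[L(a,θ)=0]`, for any probability measure `Q`:
`V ≤ V₀ + √(V₀ (1-V₀) E_{θ∼P} D_{χ²+1}(P_θ[·;A_θ], Q))`. -/
theorem stmt19 {Θ X 𝒜 : Type*} [MeasurableSpace Θ] [MeasurableSpace X]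
    [MeasurableSpace 𝒜]
    (P : Measure Θ) [IsProbabilityMeasure P]
    (κ : Kernel Θ X) [IsMarkovKernel κ]
    (Q : Measure X) [IsProbabilityMeasure Q]
    (A : Θ → Set X) (hA : MeasurableSet {p : Θ × X | p.2 ∈ A p.1})
    (L : 𝒜 → Θ → ℝ) (hLbin : ∀ a θ, L a θ = 0 ∨ L a θ = 1)
    (hL : Measurable fun p : 𝒜 × Θ => L p.1 p.2)
    (𝔞 : X → 𝒜) (h𝔞 : Measurable 𝔞)
    (hac : ∀ᵐ θ ∂P, (κ θ).restrict (A θ) ≪ Q)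
    (hint1 : ∀ θ, Integrable
      (fun x => ((((κ θ).restrict (A θ)).rnDeriv Q x).toReal) ^ 2) Q)
    (hint2 : Integrable
      (fun θ => ∫ x, ((((κ θ).restrict (A θ)).rnDeriv Q x).toReal) ^ 2 ∂Q) P)
    (V V0 : ℝ)
    (hV : V = ∫ θ, ((κ θ).restrict (A θ) {x | L (𝔞 x) θ = 0}).toReal ∂P)
    (hV0 : V0 = ⨆ a : 𝒜, (P {θ | L a θ = 0}).toReal) :
    V ≤ V0 + Real.sqrt (V0 * (1 - V0) *
      ∫ θ, (∫ x, ((((κ θ).restrict (A θ)).rnDeriv Q x).toReal) ^ 2 ∂Q) ∂P) := by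
  -- Notation
  set s : Θ → ℝ := fun θ => ∫ x, ((((κ θ).restrict (A θ)).rnDeriv Q x).toReal) ^ 2 ∂Q with hs_def
  set S : ℝ := ∫ θ, s θ ∂P with hS_def
  have hs_nonneg : ∀ θ, 0 ≤ s θ := fun θ => integral_nonneg fun x => sq_nonneg _
  have hS_nonneg : 0 ≤ S := integral_nonneg hs_nonneg
  -- the joint "success" set
  set B : Set (Θ × X) := {p : Θ × X | L (𝔞 p.2) p.1 = 0} with hB_def
  have hB : MeasurableSet B := by
    have hm : Measurable fun p : Θ × X => L (𝔞 p.2) p.1 :=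
      hL.comp ((h𝔞.comp measurable_snd).prodMk measurable_fst)
    exact hm (measurableSet_singleton 0)
  have hBθ : ∀ θ, MeasurableSet {x | L (𝔞 x) θ = 0} := by
    intro θ
    have hm : Measurable fun x : X => L (𝔞 x) θ :=
      hL.comp ((h𝔞).prodMk measurable_const)
    exact hm (measurableSet_singleton 0)
  set r : Θ → ENNReal := fun θ => (κ θ).restrict (A θ) {x | L (𝔞 x) θ = 0} with hr_def
  have hrκ : ∀ θ, r θ = κ θ (Prod.mk θ ⁻¹' (B ∩ {p : Θ × X | p.2 ∈ A p.1})) := by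
    intro θ
    show ((κ θ).restrict (A θ)) {x | L (𝔞 x) θ = 0} = _
    rw [Measure.restrict_apply (hBθ θ)]
    rfl
  have hr_meas : Measurable r := by
    rw [show r = (fun θ => κ θ (Prod.mk θ ⁻¹' (B ∩ {p : Θ × X | p.2 ∈ A p.1}))) from
      funext hrκ]
    exact Kernel.measurable_kernel_prodMk_left (hB.inter hA)
  have hr_le : ∀ θ, r θ ≤ 1 := by
    intro θ
    rw [hrκ θ]
    exact prob_le_one
  -- V as a lower integral
  have hVlint : V = (∫⁻ θ, r θ ∂P).toReal := by
    rw [hV, ← integral_toReal hr_meas.aemeasurable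
      (ae_of_all _ fun θ => lt_of_le_of_lt (hr_le θ) ENNReal.one_lt_top)]
  have hV_nonneg : 0 ≤ V := by rw [hVlint]; exact ENNReal.toReal_nonneg
  have hV_le_one : V ≤ 1 := by
    rw [hVlint]
    have h1 : ∫⁻ θ, r θ ∂P ≤ 1 := by
      calc ∫⁻ θ, r θ ∂P ≤ ∫⁻ _, 1 ∂P := lintegral_mono hr_le
      _ = 1 := by simp
    calc (∫⁻ θ, r θ ∂P).toReal ≤ (1 : ENNReal).toReal :=
      ENNReal.toReal_mono (by simp) h1
    _ = 1 := by simp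
  -- V0 facts
  have hbdd : BddAbove (Set.range fun a : 𝒜 => (P {θ | L a θ = 0}).toReal) := by
    refine ⟨1, ?_⟩
    rintro x ⟨a, rfl⟩
    exact ENNReal.toReal_le_of_le_ofReal zero_le_one (by simpa using prob_le_one)
  have hV0_nonneg : 0 ≤ V0 := by
    rw [hV0]; exact Real.iSup_nonneg fun a => ENNReal.toReal_nonneg
  have hV0_le_one : V0 ≤ 1 := by
    rw [hV0]
    exact Real.iSup_le (fun a =>
      ENNReal.toReal_le_of_le_ofReal zero_le_one (by simpa using prob_le_one)) zero_le_one
  have hV0_apply : ∀ a : 𝒜, P {θ | L a θ = 0} ≤ ENNReal.ofReal V0 := by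
    intro a
    have h1 : (P {θ | L a θ = 0}).toReal ≤ V0 := hV0 ▸ le_ciSup hbdd a
    rw [← ENNReal.ofReal_toReal (measure_ne_top P _)]
    exact ENNReal.ofReal_le_ofReal h1
  have hconj : Real.HolderConjugate 2 2 := Real.holderConjugate_iff.mpr ⟨one_lt_two, by norm_num⟩
  have hhalf : ∀ a : ENNReal, (a ^ (1/2 : ℝ)) ^ (2 : ℝ) = a := by
    intro a
    rw [← ENNReal.rpow_mul]
    norm_num
  -- Step 1: pointwise Cauchy-Schwarz in x
  have key : ∀ᵐ θ ∂P, r θ ≤ (Q {x | L (𝔞 x) θ = 0}) ^ (1/2 : ℝ)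
      * (ENNReal.ofReal (s θ)) ^ (1/2 : ℝ) := by
    filter_upwards [hac] with θ hθ
    set F : X → ENNReal := ((κ θ).restrict (A θ)).rnDeriv Q with hF_def
    have hFm : Measurable F := Measure.measurable_rnDeriv _ _
    set I : X → ENNReal := {x | L (𝔞 x) θ = 0}.indicator (fun _ => (1 : ENNReal)) with hI_def
    have hIm : Measurable I :=
      measurable_const.indicator (hBθ θ)
    have h1 : r θ = ∫⁻ x, (I * F) x ∂Q := by
      have e1 : r θ = ∫⁻ x in {x | L (𝔞 x) θ = 0}, F x ∂Q := by
        show ((κ θ).restrict (A θ)) {x | L (𝔞 x) θ = 0} = _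
        conv_lhs => rw [← Measure.withDensity_rnDeriv_eq _ _ hθ]
        rw [withDensity_apply _ (hBθ θ)]
      rw [e1, ← lintegral_indicator (hBθ θ) F]
      refine lintegral_congr fun x => ?_
      by_cases hx : x ∈ {x | L (𝔞 x) θ = 0} <;>
        simp [hI_def, hx]
    have h3 : ∫⁻ x, F x ^ (2 : ℝ) ∂Q = ENNReal.ofReal (s θ) := by
      have e2 : ENNReal.ofReal (s θ)
          = ∫⁻ x, ENNReal.ofReal ((F x).toReal ^ 2) ∂Q :=
        ofReal_integral_eq_lintegral_ofReal (hint1 θ) (ae_of_all _ fun x => sq_nonneg _)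
      rw [e2]
      refine lintegral_congr_ae ?_
      filter_upwards [Measure.rnDeriv_lt_top ((κ θ).restrict (A θ)) Q] with x hx
      rw [ENNReal.rpow_two, ← ENNReal.toReal_pow,
        ENNReal.ofReal_toReal (by exact ENNReal.pow_ne_top hx.ne)]
    have h4 : ∫⁻ x, I x ^ (2 : ℝ) ∂Q = Q {x | L (𝔞 x) θ = 0} := by
      have : ∀ x, I x ^ (2 : ℝ) = I x := by
        intro x
        by_cases hx : x ∈ {x | L (𝔞 x) θ = 0} <;>
          simp [hI_def, hx, ENNReal.rpow_two]
      simp_rw [this]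
      exact lintegral_indicator_one (hBθ θ)
    calc r θ = ∫⁻ x, (I * F) x ∂Q := h1
    _ ≤ (∫⁻ x, I x ^ (2:ℝ) ∂Q) ^ (1/2:ℝ) * (∫⁻ x, F x ^ (2:ℝ) ∂Q) ^ (1/2:ℝ) :=
        ENNReal.lintegral_mul_le_Lp_mul_Lq Q hconj hIm.aemeasurable hFm.aemeasurable
    _ = (Q {x | L (𝔞 x) θ = 0}) ^ (1/2:ℝ) * (ENNReal.ofReal (s θ)) ^ (1/2:ℝ) := by
        rw [h3, h4]
  -- Step 2: Cauchy-Schwarz in θ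
  have hQsec : Measurable fun θ => Q {x | L (𝔞 x) θ = 0} :=
    measurable_measure_prodMk_left hB
  have step2 : ∫⁻ θ, r θ ∂P ≤ (∫⁻ θ, Q {x | L (𝔞 x) θ = 0} ∂P) ^ (1/2 : ℝ)
      * (∫⁻ θ, ENNReal.ofReal (s θ) ∂P) ^ (1/2 : ℝ) := by
    refine le_trans (lintegral_mono_ae key) ?_
    have hu : AEMeasurable (fun θ => (Q {x | L (𝔞 x) θ = 0}) ^ (1/2 : ℝ)) P :=
      (ENNReal.continuous_rpow_const.measurable.comp hQsec).aemeasurable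
    have hv : AEMeasurable (fun θ => (ENNReal.ofReal (s θ)) ^ (1/2 : ℝ)) P :=
      ENNReal.continuous_rpow_const.measurable.comp_aemeasurable
        hint2.aestronglyMeasurable.aemeasurable.ennreal_ofReal
    have := ENNReal.lintegral_mul_le_Lp_mul_Lq P hconj hu hv
    simp only [Pi.mul_apply, hhalf] at this
    exact this
  -- bound the first factor
  have hG : ∫⁻ θ, Q {x | L (𝔞 x) θ = 0} ∂P ≤ ENNReal.ofReal V0 := by
    have h1 : ∫⁻ θ, Q {x | L (𝔞 x) θ = 0} ∂P = (P.prod Q) B :=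
      (Measure.prod_apply hB).symm
    have h2 : (P.prod Q) B = ∫⁻ x, P ((fun θ => (θ, x)) ⁻¹' B) ∂Q :=
      Measure.prod_apply_symm hB
    rw [h1, h2]
    calc ∫⁻ x, P ((fun θ => (θ, x)) ⁻¹' B) ∂Q
        ≤ ∫⁻ _, ENNReal.ofReal V0 ∂Q := lintegral_mono fun x => hV0_apply (𝔞 x)
    _ = ENNReal.ofReal V0 := by simp
  have hSlint : ∫⁻ θ, ENNReal.ofReal (s θ) ∂P = ENNReal.ofReal S := by
    rw [hS_def]
    exact (ofReal_integral_eq_lintegral_ofReal hint2 (ae_of_all _ hs_nonneg)).symm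
  -- main quadratic bound
  have main : V ≤ Real.sqrt (V0 * S) := by
    have h1 : ∫⁻ θ, r θ ∂P ≤ (ENNReal.ofReal V0) ^ (1/2:ℝ) * (ENNReal.ofReal S) ^ (1/2:ℝ) := by
      refine le_trans step2 ?_
      rw [hSlint]
      exact mul_le_mul_left (ENNReal.rpow_le_rpow hG (by norm_num)) _
    have hne : (ENNReal.ofReal V0) ^ (1/2:ℝ) * (ENNReal.ofReal S) ^ (1/2:ℝ) ≠ ⊤ :=
      ENNReal.mul_ne_top
        (ENNReal.rpow_ne_top_of_nonneg (by norm_num) ENNReal.ofReal_ne_top)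
        (ENNReal.rpow_ne_top_of_nonneg (by norm_num) ENNReal.ofReal_ne_top)
    rw [hVlint]
    calc (∫⁻ θ, r θ ∂P).toReal
        ≤ ((ENNReal.ofReal V0) ^ (1/2:ℝ) * (ENNReal.ofReal S) ^ (1/2:ℝ)).toReal :=
          ENNReal.toReal_mono hne h1
    _ = Real.sqrt (V0 * S) := by
        rw [ENNReal.toReal_mul, ← ENNReal.toReal_rpow, ← ENNReal.toReal_rpow,
          ENNReal.toReal_ofReal hV0_nonneg, ENNReal.toReal_ofReal hS_nonneg,
          Real.sqrt_eq_rpow, Real.mul_rpow hV0_nonneg hS_nonneg]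
  -- elementary conclusion
  by_cases hcase : V ≤ V0
  · have := Real.sqrt_nonneg (V0 * (1 - V0) * S)
    linarith
  · push_neg at hcase
    have hV2 : V ^ 2 ≤ V0 * S :=
      (Real.le_sqrt hV_nonneg (by positivity)).mp main
    have h1 : Real.sqrt ((1 - V0) * V ^ 2) ≤ Real.sqrt (V0 * (1 - V0) * S) := by
      apply Real.sqrt_le_sqrt
      nlinarith
    have h2 : Real.sqrt ((1 - V0) * V ^ 2) = Real.sqrt (1 - V0) * V := by
      rw [Real.sqrt_mul (by linarith), Real.sqrt_sq hV_nonneg]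
    have h3 : 1 - V0 ≤ Real.sqrt (1 - V0) := by
      nlinarith [Real.sq_sqrt (show (0:ℝ) ≤ 1 - V0 by linarith),
        Real.sqrt_nonneg (1 - V0)]
    nlinarith [Real.sqrt_nonneg (V0 * (1 - V0) * S)]
end
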